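/- Define d_λ(q₁,q₂) = inf over γ ∈ Γ of ( ‖(q₁*γ₁) − ((q₂*γ₂)*γ)‖² + λ‖√(γ') − 1‖² )^{1/2}, where γ₁, γ₂ are fixed warpings depending on (q₁,τ⁽¹⁾) and (q₂,τ⁽²⁾). Then d_λ is symmetric: d_λ(q₁,q₂) = d_λ(q₂,q₁). -/

import Mathlib

open MeasureTheory Set intervalIntegral

/-- Warping action on SRVFs: `(q*γ)(t) = q(γ(t))·√(γ'(t))`. -/
noncomputable def warp (q γ : ℝ → ℝ) (t : ℝ) : ℝ := q (γ t) * Real.sqrt (deriv γ t)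

/-- `γ` is an orientation-preserving C¹ diffeomorphism of `[0,1]` fixing the endpoints,
with strictly positive derivative on `[0,1]`. -/
def IsWarp (γ : ℝ → ℝ) : Prop :=
  ContDiff ℝ 1 γ ∧ γ 0 = 0 ∧ γ 1 = 1 ∧ (∀ t ∈ Set.Icc (0:ℝ) 1, 0 < deriv γ t) ∧
    Set.MapsTo γ (Set.Icc (0:ℝ) 1) (Set.Icc (0:ℝ) 1)

/-- Squared L² norm on `[0,1]`. -/
noncomputable def L2sq (g : ℝ → ℝ) : ℝ := ∫ t in (0:ℝ)..1, g t ^ 2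

/-- L² norm on `[0,1]`. -/
noncomputable def L2norm (g : ℝ → ℝ) : ℝ := Real.sqrt (L2sq g)

/-- Penalty term `‖√(γ') − 1‖²`. -/
noncomputable def penSq (γ : ℝ → ℝ) : ℝ := L2sq (fun t => Real.sqrt (deriv γ t) - 1)

/-- Soft-alignment cost for a given warping `γ`. -/
noncomputable def cost (lam : ℝ) (a b γ : ℝ → ℝ) : ℝ :=
  L2sq (fun t => a t - warp b γ t) + lam * penSq γ

/-- Soft landmark alignment pseudometric `d_λ` between (hard-registered) SRVFs `a`, `b`. -/
noncomputable def dsoft (lam : ℝ) (a b : ℝ → ℝ) : ℝ :=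
  Real.sqrt (sInf ((fun γ => cost lam a b γ) '' {γ | IsWarp γ}))

lemma exists_inverse (γ : ℝ → ℝ) (h : IsWarp γ) :
    ∃ δ : ℝ → ℝ, IsWarp δ ∧ (∀ t ∈ Icc (0:ℝ) 1, δ (γ t) = t) ∧
      (∀ t ∈ Icc (0:ℝ) 1, deriv δ (γ t) = (deriv γ t)⁻¹) := by
  obtain ⟨hc, h0, h1, hpos, hmaps⟩ := h
  have hdc : Continuous (deriv γ) := (contDiff_one_iff_deriv.mp hc).2
  have hγcont : Continuous γ := hc.continuous
  -- find ε > 0 with deriv γ > 0 on Icc (-ε) (1+ε)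
  obtain ⟨ε, hε, hJpos⟩ : ∃ ε > (0:ℝ), ∀ t ∈ Icc (-ε) (1+ε), 0 < deriv γ t := by
    have hU : IsOpen ((deriv γ) ⁻¹' Ioi 0) := isOpen_Ioi.preimage hdc
    obtain ⟨ε₀, hε₀, hb0⟩ := Metric.isOpen_iff.1 hU 0 (hpos 0 (by norm_num))
    obtain ⟨ε₁, hε₁, hb1⟩ := Metric.isOpen_iff.1 hU 1 (hpos 1 (by norm_num))
    refine ⟨min ε₀ ε₁ / 2, by positivity, fun t ht => ?_⟩
    rcases lt_or_ge t 0 with h' | h'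
    · exact hb0 (by
        simp only [Metric.mem_ball, Real.dist_eq, sub_zero]
        have := ht.1
        have h2 : min ε₀ ε₁ ≤ ε₀ := min_le_left _ _
        rw [abs_of_neg h']; linarith)
    rcases le_or_gt t 1 with h'' | h''
    · exact hpos t ⟨h', h''⟩
    · exact hb1 (by
        simp only [Metric.mem_ball, Real.dist_eq]
        have := ht.2
        have h2 : min ε₀ ε₁ ≤ ε₁ := min_le_right _ _
        rw [abs_of_pos (by linarith : (0:ℝ) < t - 1)]; linarith)
  set J : Set ℝ := Icc (-ε) (1+ε) with hJ
  have hsub : Icc (0:ℝ) 1 ⊆ J := Icc_subset_Icc (by linarith) (by linarith)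
  have hmono : StrictMonoOn γ J :=
    strictMonoOn_of_deriv_pos (convex_Icc _ _) hγcont.continuousOn
      (fun x hx => hJpos x (interior_subset hx))
  have hinj : InjOn γ J := hmono.injOn
  have hmem0 : (0:ℝ) ∈ J := hsub ⟨le_refl 0, by norm_num⟩
  have hmem1 : (1:ℝ) ∈ J := hsub ⟨by norm_num, le_refl 1⟩
  have hmemL : -ε ∈ J := ⟨le_refl _, by linarith⟩
  have hmemR : 1 + ε ∈ J := ⟨by linarith, le_refl _⟩
  have himg : γ '' J = Icc (γ (-ε)) (γ (1+ε)) := by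
    apply subset_antisymm
    · rintro _ ⟨t, ht, rfl⟩
      exact ⟨hmono.monotoneOn hmemL ht ht.1, hmono.monotoneOn ht hmemR ht.2⟩
    · exact intermediate_value_Icc (by linarith) hγcont.continuousOn
  have hγL : γ (-ε) < 0 := by
    have := hmono hmemL hmem0 (by linarith)
    rwa [h0] at this
  have hγR : 1 < γ (1+ε) := by
    have := hmono hmem1 hmemR (by linarith)
    rwa [h1] at this
  set g : ℝ → ℝ := Function.invFunOn γ J with hg
  have hleft : ∀ t ∈ J, g (γ t) = t := fun t ht => hinj.leftInvOn_invFunOn ht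
  set V : Set ℝ := Ioo (γ (-ε)) (γ (1+ε)) with hV
  have hVsub : V ⊆ γ '' J := by rw [himg]; exact Ioo_subset_Icc_self
  have hIccsub : Icc (0:ℝ) 1 ⊆ V := Icc_subset_Ioo hγL hγR
  have hgmem : ∀ y ∈ γ '' J, g y ∈ J := by
    rintro y ⟨t, ht, rfl⟩
    exact Function.invFunOn_mem (f := γ) (s := J) ⟨t, ht, rfl⟩
  have hright : ∀ y ∈ γ '' J, γ (g y) = y := by
    rintro y ⟨t, ht, rfl⟩
    exact Function.invFunOn_eq (f := γ) (s := J) ⟨t, ht, rfl⟩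
  have hginJ : ∀ y ∈ V, g y ∈ J := fun y hy => hgmem y (hVsub hy)
  have hgV : ∀ y ∈ V, g y ∈ Ioo (-ε) (1+ε) := by
    intro y hy
    have hJm := hginJ y hy
    have hr := hright y (hVsub hy)
    constructor
    · rcases eq_or_lt_of_le hJm.1 with h' | h'
      · exfalso
        have hyy : y = γ (-ε) := by rw [← hr, ← h']
        rw [hyy] at hy
        exact lt_irrefl _ hy.1
      · exact h'
    · rcases eq_or_lt_of_le hJm.2 with h' | h'
      · exfalso
        have hyy : y = γ (1+ε) := by rw [← hr, h']
        rw [hyy] at hy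
        exact lt_irrefl _ hy.2
      · exact h'
  have hgmono : StrictMonoOn g (γ '' J) := by
    intro y1 h1' y2 h2' hlt
    by_contra hcon
    push_neg at hcon
    have := hmono.monotoneOn (hgmem y2 h2') (hgmem y1 h1') hcon
    rw [hright y1 h1', hright y2 h2'] at this
    exact absurd hlt (not_lt.mpr this)
  have hgimg : g '' (γ '' J) = J := by
    apply subset_antisymm
    · rintro _ ⟨y, hy, rfl⟩; exact hgmem y hy
    · intro t ht
      exact ⟨γ t, mem_image_of_mem γ ht, hleft t ht⟩
  have hgcont : ∀ y ∈ V, ContinuousAt g y := by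
    intro y hy
    refine hgmono.continuousAt_of_image_mem_nhds
      (Filter.mem_of_superset (isOpen_Ioo.mem_nhds hy) hVsub) ?_
    rw [hgimg]
    exact Filter.mem_of_superset (isOpen_Ioo.mem_nhds (hgV y hy)) Ioo_subset_Icc_self
  have hgderiv : ∀ y ∈ V, HasDerivAt g ((deriv γ (g y))⁻¹) y := by
    intro y hy
    refine HasDerivAt.of_local_left_inverse (hgcont y hy)
      ((hc.differentiable one_ne_zero).differentiableAt.hasDerivAt) ?_ ?_
    · exact ne_of_gt (hJpos _ (hginJ y hy))
    · exact Filter.eventually_of_mem (isOpen_Ioo.mem_nhds hy)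
        (fun z hz => hright z (hVsub hz))
  have hVopen : IsOpen V := isOpen_Ioo
  have hgcdV : ContDiffOn ℝ 1 g V := by
    rw [show (1 : WithTop ℕ∞) = 0 + 1 from rfl, contDiffOn_succ_iff_deriv_of_isOpen hVopen]
    refine ⟨fun y hy => ((hgderiv y hy).differentiableAt).differentiableWithinAt, by simp, ?_⟩
    rw [contDiffOn_zero]
    have : ∀ y ∈ V, deriv g y = (deriv γ (g y))⁻¹ := fun y hy => (hgderiv y hy).deriv
    refine ContinuousOn.congr ?_ this
    refine ContinuousOn.inv₀ (hdc.comp_continuousOn ?_) ?_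
    · exact fun y hy => (hgcont y hy).continuousWithinAt
    · exact fun y hy => ne_of_gt (hJpos _ (hginJ y hy))
  -- bump function
  set m : ℝ := min (-(γ (-ε))) (γ (1+ε) - 1) with hm
  have hm0 : 0 < m := lt_min (by linarith) (by linarith)
  have hmL : m ≤ -(γ (-ε)) := min_le_left _ _
  have hmR : m ≤ γ (1+ε) - 1 := min_le_right _ _
  set B : ContDiffBump ((1:ℝ)/2) :=
    ⟨1/2 + m/2, 1/2 + 3*m/4, by positivity, by linarith⟩ with hB
  have hrIn : B.rIn = 1/2 + m/2 := rfl
  have hrOut : B.rOut = 1/2 + 3*m/4 := rfl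
  have hball_in : Icc (0:ℝ) 1 ⊆ Metric.ball ((1:ℝ)/2) B.rIn := by
    intro x hx
    simp only [Metric.mem_ball, Real.dist_eq, hrIn]
    rw [abs_sub_lt_iff]
    constructor
    · nlinarith [hx.1, hx.2]
    · nlinarith [hx.1, hx.2]
  have hcball_sub : Metric.closedBall ((1:ℝ)/2) B.rOut ⊆ V := by
    intro x hx
    simp only [Metric.mem_closedBall, Real.dist_eq, hrOut, abs_sub_le_iff] at hx
    constructor
    · nlinarith [hx.1, hx.2]
    · nlinarith [hx.1, hx.2]
  have hballV : Metric.ball ((1:ℝ)/2) B.rIn ⊆ V :=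
    subset_trans (Metric.ball_subset_ball (le_of_lt B.rIn_lt_rOut))
      (subset_trans Metric.ball_subset_closedBall hcball_sub)
  set δ : ℝ → ℝ := fun x => B x * g x with hδ
  have hδeq : ∀ x ∈ Metric.ball ((1:ℝ)/2) B.rIn, δ x = g x := by
    intro x hx
    simp only [hδ, B.one_of_mem_closedBall (Metric.ball_subset_closedBall hx), one_mul]
  have hδderiv : ∀ x ∈ Metric.ball ((1:ℝ)/2) B.rIn,
      HasDerivAt δ ((deriv γ (g x))⁻¹) x := by
    intro x hx
    refine (hgderiv x (hballV hx)).congr_of_eventuallyEq ?_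
    exact Filter.eventually_of_mem (Metric.isOpen_ball.mem_nhds hx) hδeq
  have hδcd : ContDiff ℝ 1 δ := by
    rw [contDiff_iff_contDiffAt]
    intro x
    by_cases hx : x ∈ V
    · exact (B.contDiff.contDiffAt).mul ((hgcdV.contDiffAt (hVopen.mem_nhds hx)))
    · have hxns : x ∉ tsupport (B : ℝ → ℝ) := by
        rw [B.tsupport_eq]
        exact fun hmem => hx (hcball_sub hmem)
      have hev : δ =ᶠ[nhds x] (fun _ => 0) := by
        have := notMem_tsupport_iff_eventuallyEq.mp hxns
        filter_upwards [this] with z hz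
        simp [hδ, hz]
      exact (contDiffAt_const (c := (0:ℝ))).congr_of_eventuallyEq hev
  have hginIcc : ∀ t ∈ Icc (0:ℝ) 1, g t ∈ Icc (0:ℝ) 1 := by
    intro t ht
    have htV : t ∈ V := hIccsub ht
    have hrt := hright t (hVsub htV)
    have hgJ := hginJ t htV
    constructor
    · by_contra hcon
      push_neg at hcon
      have := hmono hgJ hmem0 hcon
      rw [hrt, h0] at this
      exact absurd ht.1 (not_le.mpr this)
    · by_contra hcon
      push_neg at hcon
      have := hmono hmem1 hgJ hcon
      rw [hrt, h1] at this
      exact absurd ht.2 (not_le.mpr this)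
  have hδval : ∀ t ∈ Icc (0:ℝ) 1, δ t = g t := fun t ht => hδeq t (hball_in ht)
  have hδd : ∀ t ∈ Icc (0:ℝ) 1, deriv δ t = (deriv γ (g t))⁻¹ :=
    fun t ht => (hδderiv t (hball_in ht)).deriv
  refine ⟨δ, ⟨hδcd, ?_, ?_, ?_, ?_⟩, ?_, ?_⟩
  · rw [hδval 0 (by norm_num)]
    have : g (γ 0) = 0 := hleft 0 hmem0
    rwa [h0] at this
  · rw [hδval 1 (by norm_num)]
    have : g (γ 1) = 1 := hleft 1 hmem1
    rwa [h1] at this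
  · intro t ht
    rw [hδd t ht]
    exact inv_pos.mpr (hJpos _ (hginJ t (hIccsub ht)))
  · intro t ht
    rw [hδval t ht]
    exact hginIcc t ht
  · intro t ht
    have hγt : γ t ∈ Icc (0:ℝ) 1 := hmaps ht
    rw [hδval _ hγt]
    exact hleft t (hsub ht)
  · intro t ht
    have hγt : γ t ∈ Icc (0:ℝ) 1 := hmaps ht
    rw [hδd _ hγt, hleft t (hsub ht)]

lemma cov (γ : ℝ → ℝ) (h : IsWarp γ) (F : ℝ → ℝ) :
    ∫ x in Icc (0:ℝ) 1, F x = ∫ t in Icc (0:ℝ) 1, deriv γ t * F (γ t) := by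
  obtain ⟨hc, h0, h1, hpos, hmaps⟩ := h
  have hmono : StrictMonoOn γ (Icc (0:ℝ) 1) :=
    strictMonoOn_of_deriv_pos (convex_Icc _ _) hc.continuous.continuousOn
      (fun x hx => hpos x (interior_subset hx))
  have himg : γ '' Icc (0:ℝ) 1 = Icc (0:ℝ) 1 := by
    apply subset_antisymm (image_subset_iff.2 hmaps)
    have := intermediate_value_Icc (zero_le_one) hc.continuous.continuousOn
    rw [h0, h1] at this
    exact this
  have hder : ∀ x ∈ Icc (0:ℝ) 1, HasDerivWithinAt γ (deriv γ x) (Icc (0:ℝ) 1) x :=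
    fun x _ => ((hc.differentiable one_ne_zero).differentiableAt.hasDerivAt).hasDerivWithinAt
  calc ∫ x in Icc (0:ℝ) 1, F x = ∫ x in γ '' Icc (0:ℝ) 1, F x := by rw [himg]
    _ = ∫ t in Icc (0:ℝ) 1, |deriv γ t| • F (γ t) :=
        integral_image_eq_integral_abs_deriv_smul measurableSet_Icc hder hmono.injOn F
    _ = ∫ t in Icc (0:ℝ) 1, deriv γ t * F (γ t) := by
        apply setIntegral_congr_fun measurableSet_Icc
        intro t ht
        simp only [smul_eq_mul]
        rw [abs_of_pos (hpos t ht)]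

lemma L2sq_Icc (g : ℝ → ℝ) : L2sq g = ∫ t in Icc (0:ℝ) 1, g t ^ 2 := by
  rw [L2sq, intervalIntegral.integral_of_le zero_le_one, integral_Icc_eq_integral_Ioc]

lemma cost_symm (lam : ℝ) (a b γ δ : ℝ → ℝ) (hγ : IsWarp γ)
    (hli : ∀ t ∈ Icc (0:ℝ) 1, δ (γ t) = t)
    (hd : ∀ t ∈ Icc (0:ℝ) 1, deriv δ (γ t) = (deriv γ t)⁻¹) :
    cost lam b a δ = cost lam a b γ := by
  have hpos := hγ.2.2.2.1
  unfold cost penSq warp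
  rw [L2sq_Icc, L2sq_Icc, L2sq_Icc, L2sq_Icc]
  rw [cov γ hγ (fun x => (b x - a (δ x) * Real.sqrt (deriv δ x)) ^ 2),
      cov γ hγ (fun x => (Real.sqrt (deriv δ x) - 1) ^ 2)]
  congr 1
  · apply setIntegral_congr_fun measurableSet_Icc
    intro t ht
    have hu : 0 < Real.sqrt (deriv γ t) := Real.sqrt_pos.mpr (hpos t ht)
    have hu2 : Real.sqrt (deriv γ t) ^ 2 = deriv γ t := Real.sq_sqrt (le_of_lt (hpos t ht))
    simp only [hli t ht, hd t ht, Real.sqrt_inv]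
    set u := Real.sqrt (deriv γ t)
    rw [← hu2]
    field_simp
    ring
  · congr 1
    apply setIntegral_congr_fun measurableSet_Icc
    intro t ht
    have hu : 0 < Real.sqrt (deriv γ t) := Real.sqrt_pos.mpr (hpos t ht)
    have hu2 : Real.sqrt (deriv γ t) ^ 2 = deriv γ t := Real.sq_sqrt (le_of_lt (hpos t ht))
    simp only [hd t ht, Real.sqrt_inv]
    set u := Real.sqrt (deriv γ t)
    rw [← hu2]
    field_simp
    ring

lemma image_subset_swap (lam : ℝ) (a b : ℝ → ℝ) :
    (fun γ => cost lam a b γ) '' {γ | IsWarp γ} ⊆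
      (fun γ => cost lam b a γ) '' {γ | IsWarp γ} := by
  rintro _ ⟨γ, hγ, rfl⟩
  obtain ⟨δ, hδ, hli, hd⟩ := exists_inverse γ hγ
  exact ⟨δ, hδ, cost_symm lam a b γ δ hγ hli hd⟩

lemma image_eq_swap (lam : ℝ) (a b : ℝ → ℝ) :
    (fun γ => cost lam a b γ) '' {γ | IsWarp γ} =
      (fun γ => cost lam b a γ) '' {γ | IsWarp γ} :=
  subset_antisymm (image_subset_swap lam a b) (image_subset_swap lam b a)

/-- Symmetry of the soft landmark pseudometric `d_λ`. -/
theorem stmt6 (lam : ℝ) (hlam : 0 ≤ lam) (q₁ q₂ γ₁ γ₂ : ℝ → ℝ)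
    (h₁ : IsWarp γ₁) (h₂ : IsWarp γ₂) :
    dsoft lam (warp q₁ γ₁) (warp q₂ γ₂) = dsoft lam (warp q₂ γ₂) (warp q₁ γ₁) := by
  unfold dsoft
  rw [image_eq_swap]
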